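/- Let S be a real symmetric matrix of the block form diag(-H_x, H_y) with H_x ⪰ 0 and H_y ⪯ 0, and let A be an antisymmetric matrix of the block form [[0, -B], [Bᵀ, 0]]. Suppose no nonzero eigenvector of A lies in the kernel of S, and every eigenvalue λ of J = S + A satisfies |Im(λ)| > |Re(λ)| or Re(λ) ≠ 0. If additionally every eigenvector of A avoids Ker(S) (as assumed), then every eigenvalue λ of J satisfies Re(λ) < 0. -/

import Mathlib

open Matrix ComplexOrder

private lemma map_psd {n : Type*} [Fintype n] [DecidableEq n] {M : Matrix n n ℝ}
    (h : M.PosSemidef) : (M.map (algebraMap ℝ ℂ)).PosSemidef := by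
  obtain ⟨C, rfl⟩ : ∃ C : Matrix n n ℝ, M = Cᴴ * C := by
    open scoped MatrixOrder in
    exact ⟨CFC.sqrt M, by
      have h1 := CFC.sqrt_mul_sqrt_self M h.nonneg
      have h2 : star (CFC.sqrt M) = CFC.sqrt M := (CFC.sqrt_nonneg M).isSelfAdjoint.star_eq
      exact h1.symm.trans (congrArg (· * CFC.sqrt M) h2.symm)⟩
  have : (Cᴴ * C).map (algebraMap ℝ ℂ) = (C.map (algebraMap ℝ ℂ))ᴴ * (C.map (algebraMap ℝ ℂ)) := by
    rw [Matrix.map_mul]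
    congr 1
    ext i j
    simp [conjTranspose_apply, Complex.conj_ofReal, Complex.coe_algebraMap]
  rw [this]
  exact Matrix.posSemidef_conjTranspose_mul_self _

private lemma psd_blocks {m n : Type*} [Fintype m] [Fintype n]
    {A : Matrix m m ℂ} {D : Matrix n n ℂ} (hA : A.PosSemidef) (hD : D.PosSemidef) :
    (Matrix.fromBlocks A 0 0 D).PosSemidef := by
  refine Matrix.PosSemidef.of_dotProduct_mulVec_nonneg ?_ ?_
  · show (fromBlocks A 0 0 D)ᴴ = _
    rw [fromBlocks_conjTranspose, conjTranspose_zero, conjTranspose_zero, hA.1.eq, hD.1.eq]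
  · intro x
    rw [← Sum.elim_comp_inl_inr x, fromBlocks_mulVec, Function.star_sumElim]
    simp only [Matrix.zero_mulVec, add_zero, zero_add]
    rw [sumElim_dotProduct_sumElim]
    exact add_nonneg (hA.dotProduct_mulVec_nonneg _) (hD.dotProduct_mulVec_nonneg _)

theorem stmt16 {d₁ d₂ : ℕ}
    (Hx : Matrix (Fin d₁) (Fin d₁) ℝ) (Hy : Matrix (Fin d₂) (Fin d₂) ℝ)
    (B : Matrix (Fin d₁) (Fin d₂) ℝ)
    (hHx : Hx.PosSemidef) (hHy : (-Hy).PosSemidef)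
    (S A : Matrix (Fin d₁ ⊕ Fin d₂) (Fin d₁ ⊕ Fin d₂) ℝ)
    (hS : S = Matrix.fromBlocks (-Hx) 0 0 Hy)
    (hA : A = Matrix.fromBlocks 0 (-B) Bᵀ 0)
    (hker : ∀ v : (Fin d₁ ⊕ Fin d₂) → ℂ, v ≠ 0 →
      (∃ μ : ℂ, (A.map (algebraMap ℝ ℂ)).mulVec v = μ • v) →
      (S.map (algebraMap ℝ ℂ)).mulVec v ≠ 0)
    (hspec : ∀ lam ∈ spectrum ℂ ((S + A).map (algebraMap ℝ ℂ)),
      |lam.re| < |lam.im| ∨ lam.re ≠ 0) :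
    ∀ lam ∈ spectrum ℂ ((S + A).map (algebraMap ℝ ℂ)), lam.re < 0 := by
  intro lam hlam
  set φ := algebraMap ℝ ℂ
  set Sc := S.map φ with hSc
  set Ac := A.map φ with hAc
  -- map of sum
  have hmap : (S + A).map φ = Sc + Ac := Matrix.map_add _ (map_add φ) _ _
  -- get eigenvector
  rw [spectrum.mem_iff, hmap] at hlam
  rw [Matrix.isUnit_iff_isUnit_det, isUnit_iff_ne_zero, not_not] at hlam
  obtain ⟨v, hv0, hv⟩ := (Matrix.exists_mulVec_eq_zero_iff).mpr hlam
  have heig : Sc *ᵥ v + Ac *ᵥ v = lam • v := by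
    have : (algebraMap ℂ (Matrix (Fin d₁ ⊕ Fin d₂) (Fin d₁ ⊕ Fin d₂) ℂ) lam
        - (Sc + Ac)) *ᵥ v = algebraMap ℂ _ lam *ᵥ v - (Sc + Ac) *ᵥ v := by
      rw [Matrix.sub_mulVec]
    rw [this, sub_eq_zero] at hv
    rw [add_mulVec] at hv
    rw [← hv]
    simp [Algebra.algebraMap_eq_smul_one, Matrix.smul_mulVec, Matrix.one_mulVec]
  -- -Sc is PSD
  have hnegS : (-Sc).PosSemidef := by
    have : -Sc = (Matrix.fromBlocks (Hx.map φ) 0 0 ((-Hy).map φ)) := by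
      rw [hSc, hS]
      ext (i | i) (j | j) <;> simp [fromBlocks, map_apply]
    rw [this]
    exact psd_blocks (map_psd hHx) (map_psd hHy)
  -- Ac is skew-hermitian
  have hskew : Acᴴ = -Ac := by
    rw [hAc, hA]
    ext (i | i) (j | j) <;>
      simp [conjTranspose_apply, map_apply, fromBlocks, Complex.conj_ofReal,
        Complex.coe_algebraMap] <;>
      exact Complex.conj_ofReal _
  -- quadratic forms
  set t : ℂ := star v ⬝ᵥ v with ht
  set q : ℂ := star v ⬝ᵥ (Sc *ᵥ v) with hq
  set a : ℂ := star v ⬝ᵥ (Ac *ᵥ v) with ha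
  have hqa : q + a = lam * t := by
    rw [hq, ha, ht, ← dotProduct_add, ← add_mulVec] at *
    rw [heig]
    simp [dotProduct_smul, smul_eq_mul]
  -- t is real and positive
  have ht_nonneg : 0 ≤ t := by
    rw [ht]
    have := (Matrix.PosSemidef.one (n := Fin d₁ ⊕ Fin d₂) (R := ℂ)).dotProduct_mulVec_nonneg v
    rwa [Matrix.one_mulVec] at this
  have ht_ne : t ≠ 0 := by
    rw [ht]
    intro h
    exact hv0 (dotProduct_star_self_eq_zero.mp h)
  have ht_im : t.im = 0 := by
    have := ((Complex.le_def).mp ht_nonneg).2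
    simpa using this.symm
  have ht_re : 0 < t.re := by
    have h := ((Complex.le_def).mp ht_nonneg).1
    simp only [Complex.zero_re] at h
    rcases lt_or_eq_of_le h with h' | h'
    · exact h'
    · exact absurd (Complex.ext h'.symm ht_im) ht_ne
  -- q is real nonpositive
  have hq_nonneg : 0 ≤ -q := by
    have := hnegS.dotProduct_mulVec_nonneg v
    rwa [neg_mulVec, dotProduct_neg, ← hq] at this
  have hq_im : q.im = 0 := by
    have := ((Complex.le_def).mp hq_nonneg).2
    simpa using this.symm
  have hq_re : q.re ≤ 0 := by
    have := ((Complex.le_def).mp hq_nonneg).1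
    simp only [Complex.zero_re, Complex.neg_re] at this
    linarith
  -- a is purely imaginary
  have ha_re : a.re = 0 := by
    have hstar : star a = -a := by
      rw [ha, ← star_dotProduct, star_mulVec, hskew]
      rw [← dotProduct_mulVec, neg_mulVec, dotProduct_neg]
    have := congrArg Complex.re hstar
    simp only [Complex.star_def, Complex.conj_re, Complex.neg_re] at this
    linarith
  -- Re(lam) * t.re = q.re
  have hkey : lam.re * t.re = q.re := by
    have := congrArg Complex.re hqa
    simp only [Complex.add_re, Complex.mul_re, ht_im, ha_re, mul_zero, sub_zero, add_zero] at this
    linarith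
  -- conclude Re(lam) ≤ 0
  have hle : lam.re ≤ 0 := by
    by_contra h
    push_neg at h
    nlinarith
  rcases lt_or_eq_of_le hle with h | h
  · exact h
  -- Re(lam) = 0 case: contradiction with hker
  exfalso
  have hq0 : q = 0 := by
    apply Complex.ext
    · simp only [Complex.zero_re]
      nlinarith [hkey, h]
    · simpa using hq_im
  have hSv : Sc *ᵥ v = 0 := by
    have : star v ⬝ᵥ ((-Sc) *ᵥ v) = 0 := by
      rw [neg_mulVec, dotProduct_neg, ← hq, hq0, neg_zero]
    have := (hnegS.dotProduct_mulVec_zero_iff v).mp this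
    rw [neg_mulVec, neg_eq_zero] at this
    exact this
  have hAv : Ac *ᵥ v = lam • v := by
    rw [hSv, zero_add] at heig
    exact heig
  exact hker v hv0 ⟨lam, hAv⟩ hSv
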